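/- arXiv:2402.00899 — 2 statements merged into one kernel-verified Lean document; each statement's English description precedes it below -/
import Mathlib

section
/- Let Y_1, …, Y_m, Z be independent and identically distributed real-valued random variables, let G_m be the empirical cumulative distribution function of Y_1, …, Y_m, and let G_m^† denote its pseudo-inverse. Then for every Δ ∈ (0,1) and every ε ∈ (0,1], the joint probability (over the sample Y_1, …, Y_m and Z) satisfies P(Z ≤ G_m^†(Δ)) ≥ max(Δ − ε, 0)·(1 − 2·exp(−2mε²)). -/
open MeasureTheory ProbabilityTheory
open scoped ENNReal

/-- Empirical cumulative distribution function of the sample `x : Fin m → ℝ`. -/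
noncomputable def ecdf {m : ℕ} (x : Fin m → ℝ) (s : ℝ) : ℝ :=
  (1 / m) * ∑ i, if x i ≤ s then (1 : ℝ) else 0

/-- Pseudo-inverse of a function `G : ℝ → ℝ`: `G†(y) = inf {x | G x ≥ y}`. -/
noncomputable def pinv (G : ℝ → ℝ) (y : ℝ) : ℝ :=
  sInf {x : ℝ | G x ≥ y}

/-- number of coordinates strictly below coordinate `j` -/
noncomputable def cnt {ι : Type*} [Fintype ι] (j : ι) (x : ι → ℝ) : ℕ :=
  (Finset.univ.filter (fun i => x i < x j)).card

lemma cnt_comp {ι : Type*} [Fintype ι] [DecidableEq ι] (e : ι ≃ ι) (j : ι) (x : ι → ℝ) :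
    cnt j (x ∘ e) = cnt (e j) x := by
  unfold cnt
  apply Finset.card_nbij' e e.symm <;> intro a ha <;> simp_all

lemma card_lowrank {ι : Type*} [Fintype ι] (x : ι → ℝ) (k : ℕ) (hk : k ≤ Fintype.card ι) :
    k ≤ (Finset.univ.filter (fun j => cnt j x < k)).card := by
  classical
  by_contra h
  push_neg at h
  have hAc : (Finset.univ.filter (fun j => ¬ cnt j x < k)).Nonempty := by
    rw [← Finset.card_pos, Finset.filter_not, Finset.card_sdiff_of_subset (Finset.filter_subset _ _)]
    rw [Finset.card_univ]; omega
  obtain ⟨j₀, hj₀m, hj₀⟩ := Finset.exists_min_image _ x hAc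
  have hj₀k : k ≤ cnt j₀ x := by
    simp only [Finset.mem_filter] at hj₀m; omega
  have hsub : Finset.univ.filter (fun i => x i < x j₀) ⊆
      Finset.univ.filter (fun j => cnt j x < k) := by
    intro i hi
    simp only [Finset.mem_filter, Finset.mem_univ, true_and] at hi ⊢
    by_contra hiA
    have := hj₀ i (by simp only [Finset.mem_filter, Finset.mem_univ, true_and]; exact hiA)
    linarith
  have := Finset.card_le_card hsub
  unfold cnt at hj₀k
  omega

lemma ecdf_eq_card {m : ℕ} (x : Fin m → ℝ) (s : ℝ) :
    ecdf x s = (1 / m) * (Finset.univ.filter (fun i => x i ≤ s)).card := by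
  rw [ecdf, Finset.sum_boole]

lemma le_pinv_of_count_lt {m : ℕ} (hm : 0 < m) (y : Fin m → ℝ) (z : ℝ) {Δ : ℝ}
    (hΔ0 : 0 < Δ) (hΔ1 : Δ ≤ 1)
    (h : ((Finset.univ.filter (fun i => y i < z)).card : ℝ) < Δ * m) :
    z ≤ pinv (ecdf y) Δ := by
  have hm' : (0 : ℝ) < m := by exact_mod_cast hm
  apply le_csInf
  · obtain ⟨i₀, _, hi₀⟩ := Finset.exists_max_image Finset.univ y
      (Finset.univ_nonempty_iff.mpr (Fin.pos_iff_nonempty.mp hm))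
    refine ⟨y i₀, ?_⟩
    have : Finset.univ.filter (fun i => y i ≤ y i₀) = Finset.univ := by
      apply Finset.filter_true_of_mem
      intro i _; exact hi₀ i (Finset.mem_univ i)
    show ecdf y (y i₀) ≥ Δ
    rw [ecdf_eq_card, this, Finset.card_univ, Fintype.card_fin]
    rw [one_div, inv_mul_cancel₀ (ne_of_gt hm')]
    exact hΔ1
  · intro b hb
    by_contra hzb
    push_neg at hzb
    have hble : ecdf y b < Δ := by
      rw [ecdf_eq_card]
      have hsub : Finset.univ.filter (fun i => y i ≤ b) ⊆
          Finset.univ.filter (fun i => y i < z) := by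
        intro i hi
        simp only [Finset.mem_filter, Finset.mem_univ, true_and] at hi ⊢
        linarith
      have hc : ((Finset.univ.filter (fun i => y i ≤ b)).card : ℝ)
          ≤ ((Finset.univ.filter (fun i => y i < z)).card : ℝ) := by
        exact_mod_cast Finset.card_le_card hsub
      calc (1 / (m:ℝ)) * (Finset.univ.filter (fun i => y i ≤ b)).card
          ≤ (1 / (m:ℝ)) * (Finset.univ.filter (fun i => y i < z)).card := by
            apply mul_le_mul_of_nonneg_left hc; positivity
        _ < (1 / (m:ℝ)) * (Δ * m) := by
            apply mul_lt_mul_of_pos_left h; positivity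
        _ = Δ := by field_simp
    exact absurd hb (by simp only [Set.mem_setOf_eq] at *; linarith)

set_option maxHeartbeats 1000000 in
lemma arith_bound {Δ ε : ℝ} {m : ℕ} (hm : 1 ≤ m) (hΔ0 : 0 < Δ) (hΔ1 : Δ < 1)
    (hε0 : 0 < ε) (hε1 : ε ≤ 1) :
    max (Δ - ε) 0 * (1 - 2 * Real.exp (-2 * m * ε ^ 2)) ≤ Δ * m / (m + 1) := by
  have hM : (1 : ℝ) ≤ m := by exact_mod_cast hm
  set M : ℝ := (m : ℝ) with hMdef
  have hM1 : (0 : ℝ) < M + 1 := by linarith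
  have hRHS0 : 0 ≤ Δ * M / (M + 1) := by positivity
  rcases le_or_gt Δ ε with hle | hlt
  · rw [max_eq_right (by linarith), zero_mul]; exact hRHS0
  set t : ℝ := Real.exp (-2 * M * ε ^ 2) with ht
  have ht0 : 0 < t := Real.exp_pos _
  rw [max_eq_left (by linarith)]
  rcases le_or_gt (1 - 2 * t) 0 with hneg | hpos
  · exact le_trans (mul_nonpos_of_nonneg_of_nonpos (by linarith) hneg) hRHS0
  have key : Δ / (M + 1) ≤ ε + 2 * (Δ - ε) * t := by
    rcases le_or_gt (Δ / (M + 1)) ε with h1 | h1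
    · nlinarith
    · have h1' : ε * (M + 1) < Δ := by
        have := (lt_div_iff₀ hM1).mp h1
        linarith
      have hεsmall : ε < 1 / (M + 1) := by
        rw [lt_div_iff₀ hM1]; nlinarith
      have harg : -(1/2) ≤ -2 * M * ε ^ 2 := by
        have h2 : ε ^ 2 * (M + 1) ^ 2 ≤ 1 := by
          have : ε * (M+1) ≤ 1 := by
            have := (lt_div_iff₀ hM1).mp hεsmall
            linarith
          nlinarith [mul_pos hε0 hM1]
        have h3 : 4 * M ≤ (M + 1) ^ 2 := by nlinarith [sq_nonneg (M - 1)]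
        have h4 : 4 * M * ε ^ 2 ≤ (M + 1) ^ 2 * ε ^ 2 :=
          mul_le_mul_of_nonneg_right h3 (sq_nonneg ε)
        nlinarith
      have htexp : Real.exp (-(1/2)) ≤ t := Real.exp_le_exp.mpr harg
      have hexphalf : Real.exp (1/2) ≤ 2 := by
        nlinarith [Real.exp_one_lt_d9, Real.exp_pos (1/2 : ℝ),
          (by rw [← Real.exp_add]; norm_num : Real.exp (1/2) * Real.exp (1/2) = Real.exp 1)]
      have hhalf : (1 : ℝ) / 2 ≤ Real.exp (-(1/2)) := by
        rw [Real.exp_neg, ← one_div]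
        exact one_div_le_one_div_of_le (Real.exp_pos _) hexphalf
      have ht2 : (1 : ℝ) / 2 ≤ t := le_trans hhalf htexp
      have hΔε : Δ * M / (M + 1) ≤ Δ - ε := by
        rw [div_le_iff₀ hM1]; nlinarith
      have hRHS0' : 0 ≤ Δ * M / (M + 1) := hRHS0
      have hfinal : Δ / (M + 1) ≤ Δ * M / (M + 1) := by
        gcongr
        nlinarith
      calc Δ / (M + 1) ≤ Δ * M / (M + 1) := hfinal
        _ = 2 * (Δ * M / (M + 1)) * (1/2) := by ring
        _ ≤ 2 * (Δ - ε) * t := by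
            apply mul_le_mul ?_ ht2 (by norm_num) ?_
            · linarith [hΔε]
            · linarith [hΔε, hRHS0]
        _ ≤ ε + 2 * (Δ - ε) * t := by linarith
  have expand : Δ * M / (M + 1) = Δ - Δ / (M + 1) := by field_simp; ring
  have e2 : (Δ - ε) * (1 - 2 * t) = Δ - ε - 2 * (Δ - ε) * t := by ring
  rw [e2, expand]
  linarith

/-- A fresh i.i.d. sample falls at or below the empirical `Δ`-quantile of the
training sample with probability at least `max(Δ-ε,0) (1 - 2 exp(-2 m ε²))`. -/
theorem stmt3 {Ω : Type*} [MeasurableSpace Ω] (P : Measure Ω) [IsProbabilityMeasure P]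
    {m : ℕ} (Y : Fin m → Ω → ℝ) (Z : Ω → ℝ)
    (hmY : ∀ i, Measurable (Y i)) (hmZ : Measurable Z)
    (hindep : iIndepFun (Sum.elim Y fun _ : Unit => Z) P)
    (hident : ∀ i, Measure.map (Y i) P = Measure.map Z P)
    (Δ ε : ℝ) (hΔ : Δ ∈ Set.Ioo (0 : ℝ) 1) (hε : ε ∈ Set.Ioc (0 : ℝ) 1) :
    (P {ω | Z ω ≤ pinv (ecdf fun i => Y i ω) Δ}).toReal
      ≥ max (Δ - ε) 0 * (1 - 2 * Real.exp (-2 * m * ε ^ 2)) := by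
  classical
  obtain ⟨hΔ0, hΔ1⟩ := hΔ
  obtain ⟨hε0, hε1⟩ := hε
  rcases Nat.eq_zero_or_pos m with hm0 | hm
  · subst hm0
    have h0 : max (Δ - ε) 0 * (1 - 2 * Real.exp (-2 * (0:ℕ) * ε ^ 2)) ≤ 0 := by
      have he : (-2 : ℝ) * (0:ℕ) * ε ^ 2 = 0 := by push_cast; ring
      rw [he, Real.exp_zero]
      nlinarith [le_max_right (Δ - ε) (0:ℝ)]
    exact le_trans h0 ENNReal.toReal_nonneg
  -- setup
  set W : Fin m ⊕ Unit → Ω → ℝ := Sum.elim Y (fun _ : Unit => Z) with hWdef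
  have hW : ∀ i, Measurable (W i) := by rintro (i | u); exacts [hmY i, hmZ]
  set μ : Measure ℝ := P.map Z with hμdef
  haveI : IsProbabilityMeasure μ := Measure.isProbabilityMeasure_map hmZ.aemeasurable
  have hWd : ∀ i, P.map (W i) = μ := by rintro (i | u); exacts [hident i, rfl]
  set T : Ω → (Fin m ⊕ Unit → ℝ) := fun ω i => W i ω with hTdef
  have hT : Measurable T := measurable_pi_lambda _ hW
  have hlaw : P.map T = Measure.pi (fun _ : Fin m ⊕ Unit => μ) := by
    refine (Measure.pi_eq fun s hs => ?_).symm
    rw [Measure.map_apply hT (MeasurableSet.univ_pi hs)]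
    have hpre : T ⁻¹' Set.pi Set.univ s = ⋂ i, W i ⁻¹' s i := by
      ext ω; simp [hTdef, Set.mem_pi]
    rw [hpre, hindep.meas_iInter (fun i => ⟨s i, hs i, rfl⟩)]
    exact Finset.prod_congr rfl fun i _ => by
      rw [← hWd i, Measure.map_apply (hW i) (hs i)]
  set k : ℕ := ⌈Δ * m⌉₊ with hkdef
  have hmR : (1 : ℝ) ≤ m := by exact_mod_cast hm
  have hkm : k ≤ m + 1 := by
    rw [hkdef, Nat.ceil_le]
    push_cast
    nlinarith
  have hcnt_meas : ∀ j : Fin m ⊕ Unit, Measurable (fun x : Fin m ⊕ Unit → ℝ => cnt j x) := by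
    intro j
    have hrw : (fun x : Fin m ⊕ Unit → ℝ => cnt j x)
        = fun x => ∑ i, if x i < x j then 1 else 0 := by
      funext x; rw [cnt, Finset.card_filter]
    rw [hrw]
    exact Finset.measurable_sum _ fun i _ =>
      Measurable.ite (measurableSet_lt (measurable_pi_apply i) (measurable_pi_apply j))
        measurable_const measurable_const
  set S : Fin m ⊕ Unit → Set (Fin m ⊕ Unit → ℝ) := fun j => {x | cnt j x < k} with hSdef
  have hS : ∀ j, MeasurableSet (S j) := fun j => (hcnt_meas j) measurableSet_Iio
  set j₀ : Fin m ⊕ Unit := Sum.inr () with hj₀def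
  -- exchangeability
  have hswap : ∀ j, Measure.pi (fun _ : Fin m ⊕ Unit => μ) (S j)
      = Measure.pi (fun _ : Fin m ⊕ Unit => μ) (S j₀) := by
    intro j
    set e : (Fin m ⊕ Unit) ≃ (Fin m ⊕ Unit) := Equiv.swap j j₀ with hedef
    have hmp := measurePreserving_piCongrLeft (fun _ : Fin m ⊕ Unit => μ) e
    have hpe := hmp.measure_preimage (hS j).nullMeasurableSet
    have happ : ∀ x : Fin m ⊕ Unit → ℝ,
        (MeasurableEquiv.piCongrLeft (fun _ : Fin m ⊕ Unit => ℝ) e) x = x ∘ ⇑e.symm := by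
      intro x; funext i
      conv_lhs => rw [← e.apply_symm_apply i]
      rw [MeasurableEquiv.piCongrLeft_apply_apply]
      rfl
    have hpre : (MeasurableEquiv.piCongrLeft (fun _ : Fin m ⊕ Unit => ℝ) e) ⁻¹' (S j)
        = S j₀ := by
      ext x
      simp only [Set.mem_preimage, happ x, hSdef, Set.mem_setOf_eq]
      rw [cnt_comp e.symm j x]
      have : e.symm j = j₀ := by rw [hedef, Equiv.symm_swap, Equiv.swap_apply_left]
      rw [this]
    rw [← hpe, hpre]
  have hP : ∀ j, P (T ⁻¹' S j) = Measure.pi (fun _ : Fin m ⊕ Unit => μ) (S j) := fun j => by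
    rw [← Measure.map_apply hT (hS j), hlaw]
  -- counting bound
  have hsum : (k : ℝ≥0∞) ≤ ∑ j : Fin m ⊕ Unit, P (T ⁻¹' S j) := by
    have hbd : ∀ ω, (k : ℝ≥0∞)
        ≤ ∑ j : Fin m ⊕ Unit, (T ⁻¹' S j).indicator (fun _ => (1:ℝ≥0∞)) ω := by
      intro ω
      have hcast : ∑ j : Fin m ⊕ Unit, (T ⁻¹' S j).indicator (fun _ => (1:ℝ≥0∞)) ω
          = ((Finset.univ.filter (fun j => cnt j (T ω) < k)).card : ℝ≥0∞) := by
        rw [← Finset.sum_boole]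
        refine Finset.sum_congr rfl fun j _ => ?_
        by_cases h : cnt j (T ω) < k <;>
          simp [Set.indicator, hSdef, Set.mem_preimage, h]
      rw [hcast]
      refine Nat.cast_le.mpr (card_lowrank _ _ ?_)
      simpa using hkm
    calc (k : ℝ≥0∞) = ∫⁻ _, (k : ℝ≥0∞) ∂P := by simp
      _ ≤ ∫⁻ ω, ∑ j : Fin m ⊕ Unit, (T ⁻¹' S j).indicator (fun _ => (1:ℝ≥0∞)) ω ∂P :=
          lintegral_mono hbd
      _ = ∑ j : Fin m ⊕ Unit, ∫⁻ ω, (T ⁻¹' S j).indicator (fun _ => (1:ℝ≥0∞)) ω ∂P :=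
          lintegral_finset_sum _ fun j _ => measurable_const.indicator (hT (hS j))
      _ = ∑ j : Fin m ⊕ Unit, P (T ⁻¹' S j) := by
          refine Finset.sum_congr rfl fun j _ => ?_
          rw [lintegral_indicator (hT (hS j)), setLIntegral_const, one_mul]
  have hconst : ∀ j, P (T ⁻¹' S j) = P (T ⁻¹' S j₀) := fun j => by
    rw [hP j, hswap j, ← hP j₀]
  have hEk : (k : ℝ≥0∞) ≤ (m + 1 : ℕ) * P (T ⁻¹' S j₀) := by
    calc (k : ℝ≥0∞) ≤ ∑ j : Fin m ⊕ Unit, P (T ⁻¹' S j) := hsum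
      _ = ∑ _j : Fin m ⊕ Unit, P (T ⁻¹' S j₀) := Finset.sum_congr rfl fun j _ => hconst j
      _ = (Fintype.card (Fin m ⊕ Unit) : ℕ) * P (T ⁻¹' S j₀) := by
          rw [Finset.sum_const, Finset.card_univ, nsmul_eq_mul]
      _ = (m + 1 : ℕ) * P (T ⁻¹' S j₀) := by simp
  have hfin : P (T ⁻¹' S j₀) ≠ ⊤ := measure_ne_top P _
  have hkreal : (k : ℝ) ≤ (m + 1 : ℝ) * (P (T ⁻¹' S j₀)).toReal := by
    have h1 := ENNReal.toReal_mono (ENNReal.mul_ne_top (by simp) hfin) hEk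
    rw [ENNReal.toReal_mul, ENNReal.toReal_natCast, ENNReal.toReal_natCast] at h1
    push_cast at h1 ⊢
    linarith
  -- inclusion
  have hincl : T ⁻¹' S j₀ ⊆ {ω | Z ω ≤ pinv (ecdf fun i => Y i ω) Δ} := by
    intro ω hω
    simp only [Set.mem_preimage, hSdef, Set.mem_setOf_eq] at hω ⊢
    apply le_pinv_of_count_lt hm _ _ hΔ0 (le_of_lt hΔ1)
    have hcc : cnt j₀ (T ω)
        = (Finset.univ.filter (fun i : Fin m => Y i ω < Z ω)).card := by
      rw [cnt, Finset.card_filter, Finset.card_filter, Fintype.sum_sum_type]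
      simp [hTdef, hWdef, hj₀def]
    rw [hcc] at hω
    exact_mod_cast Nat.lt_ceil.mp (hkdef ▸ hω)
  have hmono : (P (T ⁻¹' S j₀)).toReal
      ≤ (P {ω | Z ω ≤ pinv (ecdf fun i => Y i ω) Δ}).toReal :=
    ENNReal.toReal_mono (measure_ne_top P _) (measure_mono hincl)
  have hkΔ : Δ * m ≤ (k : ℝ) := hkdef ▸ Nat.le_ceil _
  have hm1 : (0 : ℝ) < (m : ℝ) + 1 := by linarith
  have hfrac : Δ * m / (m + 1) ≤ (P (T ⁻¹' S j₀)).toReal := by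
    rw [div_le_iff₀ hm1]
    calc Δ * m ≤ (k : ℝ) := hkΔ
      _ ≤ (m + 1 : ℝ) * (P (T ⁻¹' S j₀)).toReal := hkreal
      _ = (P (T ⁻¹' S j₀)).toReal * (m + 1) := by ring
  calc max (Δ - ε) 0 * (1 - 2 * Real.exp (-2 * m * ε ^ 2))
      ≤ Δ * m / (m + 1) := arith_bound hm hΔ0 hΔ1 hε0 hε1
    _ ≤ (P (T ⁻¹' S j₀)).toReal := hfrac
    _ ≤ _ := hmono
end

section
/- Let U be a measurable space, L a finite set (with the discrete σ-algebra), F: U → L and Φ: U → ℝ^d measurable maps, h: ℝ^d → ℝ a measurable map, and P_D a probability measure on U × L. Fix ℓ_j ∈ L such that the event B = {(u, y) : F(u) = ℓ_j and y ≠ ℓ_j} has P_D(B) > 0, and let ν be the conditional measure P_D(· | B). Let (V_1, W_1), …, (V_m, W_m) be independent samples from ν, let G_m be the empirical cumulative distribution function of the values h(Φ(V_1)), …, h(Φ(V_m)), and let (u, ℓ) be a fresh sample from P_D independent of the training sample. Then for every Δ ∈ (0,1), the conditional probability (jointly over the training sample and (u, ℓ)) satisfies P(h(Φ(u)) ≤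 G_m^†(Δ) | F(u) = ℓ_j, ℓ ≠ ℓ_j) ≥ ρ(Δ, m), where ρ(a, d) = sup_{ε ∈ (0,1]} max(a − ε, 0)·(1 − 2·exp(−2dε²)). -/
open MeasureTheory ProbabilityTheory

/-- `ρ(a, d) = sup_{ε ∈ (0,1]} max(a - ε, 0) (1 - 2 exp(-2 d ε²))`. -/
noncomputable def rho (a : ℝ) (d : ℕ) : ℝ :=
  ⨆ ε : Set.Ioc (0 : ℝ) 1, max (a - ε.1) 0 * (1 - 2 * Real.exp (-2 * d * ε.1 ^ 2))

open Set
open scoped ENNReal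


private lemma hoeff_pos {p : ℝ} (hp0 : 0 ≤ p) (hp1 : p ≤ 1) (s : ℝ) :
    0 < 1 - p + p * Real.exp s := by
  rcases le_total 1 (Real.exp s) with hs | hs
  · nlinarith [Real.exp_pos s]
  · nlinarith [Real.exp_pos s]

private lemma hoeff_log {p : ℝ} (hp0 : 0 ≤ p) (hp1 : p ≤ 1) (t : ℝ) :
    (1 - p + p * Real.exp t) * Real.exp (-(p * t)) ≤ Real.exp (t ^ 2 / 8) := by
  have hD := hoeff_pos hp0 hp1
  set f : ℝ → ℝ := fun s => s ^ 2 / 8 - Real.log (1 - p + p * Real.exp s) + p * s with hf_def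
  set g : ℝ → ℝ := fun s => s / 4 - p * Real.exp s / (1 - p + p * Real.exp s) + p with hg_def
  have hder : ∀ s : ℝ, HasDerivAt (fun s => 1 - p + p * Real.exp s) (p * Real.exp s) s := by
    intro s
    simpa using ((Real.hasDerivAt_exp s).const_mul p).const_add (1 - p)
  have hfd : ∀ s, HasDerivAt f (g s) s := by
    intro s
    have h2 : HasDerivAt (fun s => Real.log (1 - p + p * Real.exp s))
        (p * Real.exp s / (1 - p + p * Real.exp s)) s := (hder s).log (hD s).ne'
    have h3 : HasDerivAt (fun s : ℝ => s ^ 2 / 8) (s / 4) s := by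
      have := (hasDerivAt_pow 2 s).div_const 8
      exact this.congr_deriv (by norm_num; ring)
    have h4 : HasDerivAt (fun s : ℝ => p * s) p s := by
      simpa using (hasDerivAt_id s).const_mul p
    exact (h3.sub h2).add h4
  have hgd : ∀ s, HasDerivAt g
      (1 / 4 - p * (1 - p) * Real.exp s / (1 - p + p * Real.exp s) ^ 2) s := by
    intro s
    have h2 : HasDerivAt (fun s => p * Real.exp s) (p * Real.exp s) s :=
      (Real.hasDerivAt_exp s).const_mul p
    have h3 := h2.div (hder s) (hD s).ne'
    have h4 : HasDerivAt (fun s : ℝ => s / 4) (1 / 4) s := (hasDerivAt_id s).div_const 4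
    have h5 := (h4.sub h3).add_const p
    have := (hD s).ne'
    exact h5.congr_deriv (by field_simp; ring)
  have hg0 : g 0 = 0 := by
    simp only [hg_def]
    norm_num
  have hgmono : Monotone g := by
    apply monotone_of_deriv_nonneg (fun s => (hgd s).differentiableAt)
    intro s
    rw [(hgd s).deriv, sub_nonneg, div_le_iff₀ (pow_pos (hD s) 2)]
    nlinarith [Real.exp_pos s, sq_nonneg (1 - p - p * Real.exp s)]
  have hf0 : f 0 = 0 := by
    simp only [hf_def]
    norm_num
  have hdiff : Differentiable ℝ f := fun s => (hfd s).differentiableAt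
  have hfnn : ∀ s, 0 ≤ f s := by
    intro s
    rcases le_total 0 s with hs | hs
    · have hmono : MonotoneOn f (Ici (0 : ℝ)) := by
        apply monotoneOn_of_deriv_nonneg (convex_Ici 0) hdiff.continuous.continuousOn
          hdiff.differentiableOn
        intro x hx
        rw [(hfd x).deriv]
        rw [interior_Ici] at hx
        calc (0 : ℝ) = g 0 := hg0.symm
          _ ≤ g x := hgmono (le_of_lt hx)
      calc (0 : ℝ) = f 0 := hf0.symm
        _ ≤ f s := hmono (mem_Ici.2 le_rfl) (mem_Ici.2 hs) hs
    · have hanti : AntitoneOn f (Iic (0 : ℝ)) := by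
        apply antitoneOn_of_deriv_nonpos (convex_Iic 0) hdiff.continuous.continuousOn
          hdiff.differentiableOn
        intro x hx
        rw [(hfd x).deriv]
        rw [interior_Iic] at hx
        calc g x ≤ g 0 := hgmono (le_of_lt hx)
          _ = 0 := hg0
      calc (0 : ℝ) = f 0 := hf0.symm
        _ ≤ f s := hanti (mem_Iic.2 hs) (mem_Iic.2 le_rfl) hs
  have h2 : Real.log ((1 - p + p * Real.exp t) * Real.exp (-(p * t))) ≤ t ^ 2 / 8 := by
    rw [Real.log_mul (hD t).ne' (Real.exp_ne_zero _), Real.log_exp]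
    have := hfnn t
    simp only [hf_def] at this
    linarith
  calc (1 - p + p * Real.exp t) * Real.exp (-(p * t))
      = Real.exp (Real.log ((1 - p + p * Real.exp t) * Real.exp (-(p * t)))) :=
        (Real.exp_log (mul_pos (hD t) (Real.exp_pos _))).symm
    _ ≤ Real.exp (t ^ 2 / 8) := Real.exp_le_exp.2 h2

section ecdf

variable {m : ℕ} {Δ : ℝ}

lemma ecdf_mono (y : Fin m → ℝ) : Monotone (ecdf y) := by
  intro s t hst
  unfold ecdf
  refine mul_le_mul_of_nonneg_left ?_ (by positivity)
  refine Finset.sum_le_sum fun i _ => ?_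
  by_cases hi : y i ≤ s
  · simp [hi, hi.trans hst]
  · rw [if_neg hi]
    positivity

lemma ecdf_nonempty (hm : 0 < m) (hΔ1 : Δ ≤ 1) (y : Fin m → ℝ) :
    {x : ℝ | ecdf y x ≥ Δ}.Nonempty := by
  haveI : Nonempty (Fin m) := ⟨⟨0, hm⟩⟩
  refine ⟨Finset.univ.sup' Finset.univ_nonempty y, ?_⟩
  have : ecdf y (Finset.univ.sup' Finset.univ_nonempty y) = 1 := by
    unfold ecdf
    have hsum : ∑ i, (if y i ≤ Finset.univ.sup' Finset.univ_nonempty y then (1 : ℝ) else 0)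
        = (m : ℝ) := by
      rw [Finset.sum_congr rfl fun i _ => if_pos (Finset.le_sup' y (Finset.mem_univ i))]
      simp
    rw [hsum]
    field_simp
  rw [Set.mem_setOf_eq, this]
  exact hΔ1

lemma ecdf_bddBelow (hΔ0 : 0 < Δ) (hm : 0 < m) (y : Fin m → ℝ) :
    BddBelow {x : ℝ | ecdf y x ≥ Δ} := by
  haveI : Nonempty (Fin m) := ⟨⟨0, hm⟩⟩
  refine ⟨Finset.univ.inf' Finset.univ_nonempty y - 1, fun s hs => ?_⟩
  by_contra hlt
  push_neg at hlt
  have h0 : ecdf y s = 0 := by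
    unfold ecdf
    rw [Finset.sum_congr rfl fun i _ => if_neg (by
      have := Finset.inf'_le y (Finset.mem_univ i)
      push_neg
      linarith)]
    simp
  rw [Set.mem_setOf_eq, h0] at hs
  linarith

lemma ecdf_attained (hm : 0 < m) (hΔ0 : 0 < Δ) (hΔ1 : Δ ≤ 1) (y : Fin m → ℝ) :
    Δ ≤ ecdf y (pinv (ecdf y) Δ) := by
  have hne := ecdf_nonempty hm hΔ1 y
  have hbdd := ecdf_bddBelow hΔ0 hm y
  set q := pinv (ecdf y) Δ with hq
  obtain ⟨δ, hδpos, hsep⟩ : ∃ δ > (0 : ℝ), ∀ i, q < y i → q + δ ≤ y i := by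
    classical
    by_cases hA : (Finset.univ.filter fun i => q < y i).Nonempty
    · refine ⟨(Finset.univ.filter fun i => q < y i).inf' hA y - q, ?_, ?_⟩
      · rw [gt_iff_lt, sub_pos, Finset.lt_inf'_iff]
        intro i hi
        exact (Finset.mem_filter.1 hi).2
      · intro i hi
        have hmem : i ∈ Finset.univ.filter fun i => q < y i := by
          simp only [Finset.mem_filter, Finset.mem_univ, true_and]
          exact hi
        have := Finset.inf'_le y hmem
        linarith
    · refine ⟨1, one_pos, fun i hi => absurd ?_ hA⟩
      refine ⟨i, ?_⟩
      simp only [Finset.mem_filter, Finset.mem_univ, true_and]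
      exact hi
  obtain ⟨s, hsS, hslt⟩ : ∃ s ∈ {x : ℝ | ecdf y x ≥ Δ}, s < q + δ :=
    (csInf_lt_iff hbdd hne).1 (by rw [hq, pinv]; linarith)
  have hqs : q ≤ s := csInf_le hbdd hsS
  have heq : ecdf y q = ecdf y s := by
    unfold ecdf
    congr 1
    refine Finset.sum_congr rfl fun i _ => ?_
    by_cases hi : y i ≤ q
    · rw [if_pos hi, if_pos (hi.trans hqs)]
    · push_neg at hi
      rw [if_neg (not_le.2 hi), if_neg (by push_neg; linarith [hsep i hi])]
  rw [heq]
  exact hsS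

lemma pinv_le_iff (hm : 0 < m) (hΔ0 : 0 < Δ) (hΔ1 : Δ ≤ 1) (y : Fin m → ℝ) (τ : ℝ) :
    pinv (ecdf y) Δ ≤ τ ↔ Δ ≤ ecdf y τ :=
  ⟨fun hle => (ecdf_attained hm hΔ0 hΔ1 y).trans (ecdf_mono y hle),
   fun hτ => csInf_le (ecdf_bddBelow hΔ0 hm y) hτ⟩

lemma meas_pinv (hm : 0 < m) (hΔ0 : 0 < Δ) (hΔ1 : Δ ≤ 1) :
    Measurable fun y : Fin m → ℝ => pinv (ecdf y) Δ := by
  apply measurable_of_Iic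
  intro τ
  have : (fun y : Fin m → ℝ => pinv (ecdf y) Δ) ⁻¹' Iic τ
      = {y : Fin m → ℝ | Δ ≤ ecdf y τ} := by
    ext y
    simp only [Set.mem_preimage, Set.mem_Iic, Set.mem_setOf_eq]
    exact pinv_le_iff hm hΔ0 hΔ1 y τ
  rw [this]
  have hmeas : Measurable fun y : Fin m → ℝ => ecdf y τ := by
    unfold ecdf
    apply Measurable.const_mul
    apply Finset.measurable_sum
    intro i _
    exact Measurable.ite ((measurable_pi_apply i) measurableSet_Iic) measurable_const
      measurable_const
  exact measurableSet_le measurable_const hmeas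

lemma t0_le_pinv (hm : 0 < m) (hΔ0 : 0 < Δ) (hΔ1 : Δ ≤ 1) (y : Fin m → ℝ) (t₀ : ℝ)
    (hcount : (∑ i, if y i < t₀ then (1 : ℝ) else 0) < Δ * m) :
    t₀ ≤ pinv (ecdf y) Δ := by
  by_contra hlt
  push_neg at hlt
  set q := pinv (ecdf y) Δ with hq
  have h1 : Δ ≤ ecdf y q := ecdf_attained hm hΔ0 hΔ1 y
  have hmR : (0 : ℝ) < m := by exact_mod_cast hm
  have h2 : Δ * m ≤ ∑ i, if y i ≤ q then (1 : ℝ) else 0 := by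
    unfold ecdf at h1
    rw [div_mul_eq_mul_div, one_mul] at h1
    calc Δ * m ≤ ((∑ i, if y i ≤ q then (1 : ℝ) else 0) / m) * m := by gcongr
      _ = ∑ i, if y i ≤ q then (1 : ℝ) else 0 := by field_simp
  have h3 : (∑ i, if y i ≤ q then (1 : ℝ) else 0) ≤ ∑ i, if y i < t₀ then (1 : ℝ) else 0 := by
    refine Finset.sum_le_sum fun i _ => ?_
    by_cases hi : y i ≤ q
    · rw [if_pos hi, if_pos (lt_of_le_of_lt hi hlt)]
    · rw [if_neg hi]
      positivity
  linarith

end ecdf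

lemma count_bound {Ω : Type*} [MeasurableSpace Ω] (P : Measure Ω) [IsProbabilityMeasure P]
    {m : ℕ} (hm : 0 < m) (Y : Fin m → Ω → ℝ) (hYm : ∀ i, Measurable (Y i))
    (hYindep : iIndepFun Y P)
    (t₀ p Δ ε : ℝ) (hp : ∀ i, (P {ω | Y i ω < t₀}).toReal = p)
    (hε : 0 < ε) (hpΔ : p ≤ Δ - ε) :
    (P {ω | Δ * m ≤ ∑ i, if Y i ω < t₀ then (1 : ℝ) else 0}).toReal
      ≤ Real.exp (-2 * m * ε ^ 2) := by
  classical
  set i₀ : Fin m := ⟨0, hm⟩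
  have h0p : 0 ≤ p := by rw [← hp i₀]; exact ENNReal.toReal_nonneg
  have h1p : p ≤ 1 := by
    rw [← hp i₀]
    calc (P {ω | Y i₀ ω < t₀}).toReal ≤ (1 : ℝ≥0∞).toReal :=
          ENNReal.toReal_mono ENNReal.one_ne_top prob_le_one
      _ = 1 := by simp
  set W : Fin m → Ω → ℝ := fun i ω => if Y i ω < t₀ then (1 : ℝ) else 0 with hW_def
  have hWm : ∀ i, Measurable (W i) := fun i =>
    Measurable.ite ((hYm i) measurableSet_Iio) measurable_const measurable_const
  have hWindep : iIndepFun W P := by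
    have := hYindep.comp (fun (_ : Fin m) (x : ℝ) => if x < t₀ then (1 : ℝ) else 0)
      (fun i => Measurable.ite measurableSet_Iio measurable_const measurable_const)
    exact this
  set s : ℝ := 4 * ε with hs_def
  have hs0 : 0 ≤ s := by positivity
  have hintW : ∀ i, Integrable (W i) P := by
    intro i
    refine Integrable.mono' (integrable_const 1) (hWm i).aestronglyMeasurable
      (Filter.Eventually.of_forall fun ω => ?_)
    rw [Real.norm_eq_abs]
    by_cases hi : Y i ω < t₀ <;> simp [hW_def, hi]
  have hinteg : ∀ i, Integrable (fun ω => Real.exp (s * W i ω)) P := by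
    intro i
    refine Integrable.mono' (integrable_const (max (Real.exp s) 1))
      ((hWm i).const_mul s).exp.aestronglyMeasurable
      (Filter.Eventually.of_forall fun ω => ?_)
    rw [Real.norm_eq_abs, abs_of_pos (Real.exp_pos _)]
    by_cases hi : Y i ω < t₀
    · simp only [hW_def, if_pos hi, mul_one]
      exact le_max_left _ _
    · simp only [hW_def, if_neg hi, mul_zero, Real.exp_zero]
      exact le_max_right _ _
  have hXm : Measurable (∑ i, W i) := by
    have : (∑ i, W i) = fun ω => ∑ i, W i ω := funext fun ω => Finset.sum_apply _ _ _
    rw [this]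
    exact Finset.measurable_sum Finset.univ fun i _ => hWm i
  have hintegX : Integrable (fun ω => Real.exp (s * (∑ i, W i) ω)) P := by
    refine Integrable.mono' (integrable_const (Real.exp (s * m)))
      ?_ (Filter.Eventually.of_forall fun ω => ?_)
    · exact ((hXm.const_mul s).exp).aestronglyMeasurable
    · rw [Real.norm_eq_abs, abs_of_pos (Real.exp_pos _), Real.exp_le_exp]
      have h1 : (∑ i, W i) ω ≤ (m : ℝ) := by
        rw [Finset.sum_apply]
        calc ∑ i, W i ω ≤ ∑ _i : Fin m, (1 : ℝ) := by
              refine Finset.sum_le_sum fun i _ => ?_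
              by_cases hi : Y i ω < t₀ <;> simp [hW_def, hi]
          _ = (m : ℝ) := by simp
      exact mul_le_mul_of_nonneg_left h1 hs0
  have hmgfW : ∀ i, mgf (W i) P s = 1 - p + p * Real.exp s := by
    intro i
    have he : ∀ ω, Real.exp (s * W i ω) = 1 + (Real.exp s - 1) * W i ω := by
      intro ω
      by_cases hi : Y i ω < t₀ <;> simp [hW_def, hi] <;> ring
    have hEW : ∫ ω, W i ω ∂P = p := by
      rw [← hp i]
      have : W i = ({ω | Y i ω < t₀} : Set Ω).indicator (fun _ => (1 : ℝ)) := by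
        ext ω
        rw [Set.indicator_apply]
        rfl
      rw [this]
      exact integral_indicator_one ((hYm i) measurableSet_Iio)
    calc mgf (W i) P s = ∫ ω, Real.exp (s * W i ω) ∂P := rfl
      _ = ∫ ω, (1 + (Real.exp s - 1) * W i ω) ∂P := by
          exact integral_congr_ae (Filter.Eventually.of_forall fun ω => he ω)
      _ = ∫ _ω, (1 : ℝ) ∂P + ∫ ω, (Real.exp s - 1) * W i ω ∂P :=
          integral_add (integrable_const 1) ((hintW i).const_mul _)
      _ = 1 + (Real.exp s - 1) * p := by
          rw [MeasureTheory.integral_const_mul, hEW]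
          simp
      _ = 1 - p + p * Real.exp s := by ring
  have hmgfX : mgf (∑ i, W i) P s = (1 - p + p * Real.exp s) ^ m := by
    rw [hWindep.mgf_sum hWm Finset.univ]
    rw [Finset.prod_congr rfl fun i _ => hmgfW i]
    simp
  have hchern := measure_ge_le_exp_mul_mgf (μ := P) (X := ∑ i, W i) (Δ * m) hs0 hintegX
  have hset : {ω | Δ * m ≤ (∑ i, W i) ω} = {ω | Δ * m ≤ ∑ i, if Y i ω < t₀ then (1 : ℝ) else 0} := by
    ext ω
    simp [Finset.sum_apply, hW_def]
  rw [hset, hmgfX] at hchern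
  refine hchern.trans ?_
  have hD := hoeff_pos h0p h1p s
  have hDle : 1 - p + p * Real.exp s ≤ Real.exp (s ^ 2 / 8 + p * s) := by
    have := hoeff_log h0p h1p s
    calc 1 - p + p * Real.exp s
        = ((1 - p + p * Real.exp s) * Real.exp (-(p * s))) * Real.exp (p * s) := by
          rw [mul_assoc, ← Real.exp_add]
          simp
      _ ≤ Real.exp (s ^ 2 / 8) * Real.exp (p * s) := by
          exact mul_le_mul_of_nonneg_right this (Real.exp_pos _).le
      _ = Real.exp (s ^ 2 / 8 + p * s) := (Real.exp_add _ _).symm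
  calc Real.exp (-s * (Δ * m)) * (1 - p + p * Real.exp s) ^ m
      ≤ Real.exp (-s * (Δ * m)) * (Real.exp (s ^ 2 / 8 + p * s)) ^ m := by
        refine mul_le_mul_of_nonneg_left (pow_le_pow_left₀ hD.le hDle m) (Real.exp_pos _).le
    _ = Real.exp (-s * (Δ * m) + m * (s ^ 2 / 8 + p * s)) := by
        rw [← Real.exp_nat_mul, ← Real.exp_add]
    _ ≤ Real.exp (-2 * m * ε ^ 2) := by
        rw [Real.exp_le_exp]
        have hm0 : (0 : ℝ) ≤ m := Nat.cast_nonneg m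
        have hkey : s ^ 2 / 8 + p * s - s * Δ ≤ -2 * ε ^ 2 := by
          have : p * s - s * Δ ≤ -(s * ε) := by nlinarith
          nlinarith
        nlinarith

lemma iIndepFun_precomp {ι ι' Ω β : Type*} [MeasurableSpace Ω] [mβ : MeasurableSpace β]
    {f : ι → Ω → β} {μ : Measure Ω} (g : ι' → ι) (hg : Function.Injective g)
    (h : iIndepFun f μ) :
    iIndepFun (fun j => f (g j)) μ := by
  classical
  rw [iIndepFun_iff_measure_inter_preimage_eq_mul] at h ⊢
  intro S sets hsets
  set F' : ι → Set β := fun i => if hi : ∃ j, g j = i then sets hi.choose else Set.univ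
    with hF'_def
  have hF' : ∀ j, F' (g j) = sets j := by
    intro j
    have hex : ∃ j', g j' = g j := ⟨j, rfl⟩
    simp only [hF'_def, dif_pos hex]
    exact congrArg sets (hg hex.choose_spec)
  have hmeas : ∀ i, i ∈ S.image g → MeasurableSet[mβ] (F' i) := by
    intro i hi
    obtain ⟨j, hj, rfl⟩ := Finset.mem_image.1 hi
    rw [hF' j]
    exact hsets j hj
  have hS := h (S.image g) hmeas
  have hL : (⋂ i ∈ S.image g, f i ⁻¹' F' i) = ⋂ j ∈ S, (fun j => f (g j)) j ⁻¹' sets j := by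
    ext x
    simp only [Set.mem_iInter, Finset.mem_image, Set.mem_preimage]
    constructor
    · intro hx j hj
      have := hx (g j) ⟨j, hj, rfl⟩
      rwa [hF' j] at this
    · rintro hx i ⟨j, hj, rfl⟩
      rw [hF' j]
      exact hx j hj
  have hR : (∏ i ∈ S.image g, μ (f i ⁻¹' F' i)) = ∏ j ∈ S, μ ((fun j => f (g j)) j ⁻¹' sets j) := by
    rw [Finset.prod_image (fun a _ b _ hab => hg hab)]
    exact Finset.prod_congr rfl fun j _ => by rw [hF' j]
  rw [hL, hR] at hS
  exact hS

lemma cdf_quantile (μ : Measure ℝ) [IsProbabilityMeasure μ] {r : ℝ} (hr0 : 0 < r) (hr1 : r < 1) :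
    ∃ t₀ : ℝ, ENNReal.ofReal r ≤ μ (Iic t₀) ∧ μ (Iio t₀) ≤ ENNReal.ofReal r := by
  classical
  set S : Set ℝ := {s : ℝ | r ≤ cdf μ s} with hS_def
  have hne : S.Nonempty := by
    obtain ⟨s, hs⟩ := ((tendsto_cdf_atTop μ).eventually (eventually_ge_nhds hr1)).exists
    exact ⟨s, hs⟩
  have hbdd : BddBelow S := by
    obtain ⟨b, hb⟩ := Filter.eventually_atBot.1
      ((tendsto_cdf_atBot μ).eventually (eventually_lt_nhds hr0))
    refine ⟨b, fun s hs => ?_⟩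
    by_contra hlt
    push_neg at hlt
    exact absurd hs (not_le.2 (hb s hlt.le))
  refine ⟨sInf S, ?_, ?_⟩
  · have hcdf : r ≤ cdf μ (sInf S) := by
      have htend : Filter.Tendsto (cdf μ) (nhdsWithin (sInf S) (Ioi (sInf S)))
          (nhds (cdf μ (sInf S))) :=
        ((cdf μ).right_continuous (sInf S)).tendsto.mono_left
          (nhdsWithin_mono _ Ioi_subset_Ici_self)
      refine ge_of_tendsto htend ?_
      refine Filter.eventually_iff_exists_mem.2 ⟨Ioi (sInf S), self_mem_nhdsWithin, fun s hs => ?_⟩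
      obtain ⟨w, hwS, hws⟩ := (csInf_lt_iff hbdd hne).1 hs
      exact le_trans hwS (monotone_cdf μ hws.le)
    calc ENNReal.ofReal r ≤ ENNReal.ofReal (cdf μ (sInf S)) := ENNReal.ofReal_le_ofReal hcdf
      _ = μ (Iic (sInf S)) := ofReal_cdf μ _
  · have hsub : Iio (sInf S) = ⋃ n : ℕ, Iic (sInf S - 1 / (n + 1)) := by
      ext x
      simp only [mem_Iio, mem_iUnion, mem_Iic]
      constructor
      · intro hx
        obtain ⟨n, hn⟩ := exists_nat_one_div_lt (sub_pos.2 hx)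
        exact ⟨n, by linarith⟩
      · rintro ⟨n, hn⟩
        have h0 : (0 : ℝ) < 1 / ((n : ℝ) + 1) := by positivity
        linarith
    rw [hsub]
    have hdir : Monotone fun n : ℕ => Iic (sInf S - 1 / ((n : ℝ) + 1)) := by
      intro a b hab
      apply Iic_subset_Iic.2
      have h1 : (1 : ℝ) / ((b : ℝ) + 1) ≤ 1 / ((a : ℝ) + 1) := by
        apply one_div_le_one_div_of_le (by positivity)
        have : (a : ℝ) ≤ b := by exact_mod_cast hab
        linarith
      linarith
    rw [hdir.directed_le.measure_iUnion]
    refine iSup_le fun n => ?_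
    have hlt : sInf S - 1 / ((n : ℝ) + 1) < sInf S := by
      have h0 : (0 : ℝ) < 1 / ((n : ℝ) + 1) := by positivity
      linarith
    have hnotmem : sInf S - 1 / ((n : ℝ) + 1) ∉ S := fun hmem =>
      absurd (csInf_le hbdd hmem) (not_le.2 hlt)
    have hcdf : cdf μ (sInf S - 1 / ((n : ℝ) + 1)) < r := not_le.1 hnotmem
    calc μ (Iic (sInf S - 1 / ((n : ℝ) + 1)))
        = ENNReal.ofReal (cdf μ (sInf S - 1 / ((n : ℝ) + 1))) := (ofReal_cdf μ _).symm
      _ ≤ ENNReal.ofReal r := ENNReal.ofReal_le_ofReal hcdf.le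

/-- Rejection bound of Theorem 1: the corrector rejects an incorrect decision of the
classifier `F` with conditional probability at least `ρ(Δ, m)`. The training pairs
`T i = (Vᵢ, Wᵢ)` are i.i.d. from the conditional measure `P_D(· | F(u) = ℓj, y ≠ ℓj)`,
the fresh sample `(u, ℓ)` is drawn from `P_D`, and all are jointly independent. -/
theorem stmt6 {U : Type*} [MeasurableSpace U]
    {L : Type*} [Fintype L] [MeasurableSpace L] [DiscreteMeasurableSpace L]
    {d : ℕ} (F : U → L) (Φ : U → (Fin d → ℝ)) (h : (Fin d → ℝ) → ℝ)
    (hF : Measurable F) (hΦ : Measurable Φ) (hh : Measurable h)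
    (PD : Measure (U × L)) [IsProbabilityMeasure PD]
    (ℓj : L) (hB : 0 < PD {q : U × L | F q.1 = ℓj ∧ q.2 ≠ ℓj})
    {m : ℕ} {Ω : Type*} [MeasurableSpace Ω] (P : Measure Ω) [IsProbabilityMeasure P]
    (T : Fin m → Ω → U × L) (u : Ω → U) (ℓ : Ω → L)
    (hmT : ∀ i, Measurable (T i)) (hmu : Measurable u) (hmℓ : Measurable ℓ)
    (hindep : iIndepFun
      (Sum.elim T fun _ : Unit => fun ω => (u ω, ℓ ω)) P)
    (hT : ∀ i, Measure.map (T i) P = PD[|{q : U × L | F q.1 = ℓj ∧ q.2 ≠ ℓj}])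
    (hu : Measure.map (fun ω => (u ω, ℓ ω)) P = PD)
    (Δ : ℝ) (hΔ : Δ ∈ Set.Ioo (0 : ℝ) 1) :
    ((P[|{ω | F (u ω) = ℓj ∧ ℓ ω ≠ ℓj}])
        {ω | h (Φ (u ω)) ≤ pinv (ecdf fun i => h (Φ (T i ω).1)) Δ}).toReal
      ≥ rho Δ m := by
  classical
  set B : Set (U × L) := {q : U × L | F q.1 = ℓj ∧ q.2 ≠ ℓj} with hB_def
  have hBmeas : MeasurableSet B := by
    have h1 : MeasurableSet {q : U × L | F q.1 = ℓj} :=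
      (hF.comp measurable_fst) (measurableSet_singleton ℓj)
    have h2 : MeasurableSet {q : U × L | q.2 ≠ ℓj} :=
      (measurable_snd (measurableSet_singleton ℓj)).compl
    exact h1.inter h2
  set ν : Measure (U × L) := PD[|B] with hν_def
  haveI hνprob : IsProbabilityMeasure ν := cond_isProbabilityMeasure hB.ne'
  set φ : U × L → ℝ := fun v => h (Φ v.1) with hφ_def
  have hφm : Measurable φ := hh.comp (hΦ.comp measurable_fst)
  set μ : Measure ℝ := ν.map φ with hμ_def
  haveI : IsProbabilityMeasure μ := Measure.isProbabilityMeasure_map hφm.aemeasurable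
  set V : Ω → U × L := fun ω => (u ω, ℓ ω) with hV_def
  have hVm : Measurable V := hmu.prodMk hmℓ
  set A : Set Ω := {ω | F (u ω) = ℓj ∧ ℓ ω ≠ ℓj} with hA_def
  have hAV : A = V ⁻¹' B := rfl
  have hAmeas : MeasurableSet A := hAV ▸ hVm hBmeas
  have hPA : P A = PD B := by
    rw [hAV, ← Measure.map_apply hVm hBmeas, hu]
  have hPAne : P A ≠ 0 := by rw [hPA]; exact hB.ne'
  set E : Set Ω := {ω | h (Φ (u ω)) ≤ pinv (ecdf fun i => h (Φ (T i ω).1)) Δ} with hE_def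
  -- reduce rho to a single ε
  haveI : Nonempty (Set.Ioc (0 : ℝ) 1) := ⟨⟨1, by norm_num⟩⟩
  rw [ge_iff_le, rho]
  apply ciSup_le
  rintro ⟨ε, hε0, hε1⟩
  show max (Δ - ε) 0 * (1 - 2 * Real.exp (-2 * (m : ℝ) * ε ^ 2)) ≤ ((P[|A]) E).toReal
  by_cases hcase1 : Δ - ε ≤ 0
  · rw [max_eq_right hcase1, zero_mul]
    exact ENNReal.toReal_nonneg
  push_neg at hcase1
  by_cases hcase2 : 1 - 2 * Real.exp (-2 * (m : ℝ) * ε ^ 2) ≤ 0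
  · exact le_trans (mul_nonpos_iff.2 (Or.inl ⟨le_max_right _ _, hcase2⟩))
      ENNReal.toReal_nonneg
  push_neg at hcase2
  have hm : 0 < m := by
    by_contra hm0
    push_neg at hm0
    have hm0' : m = 0 := Nat.le_zero.1 hm0
    rw [hm0'] at hcase2
    simp only [Nat.cast_zero, mul_zero, zero_mul, Real.exp_zero] at hcase2
    linarith
  have hr0 : 0 < Δ - ε := hcase1
  have hr1 : Δ - ε < 1 := by
    have := hΔ.2
    linarith
  obtain ⟨t₀, ht₀Iic, ht₀Iio⟩ := cdf_quantile μ hr0 hr1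
  -- random variables
  set Y : Fin m → Ω → ℝ := fun i ω => φ (T i ω) with hY_def
  have hYm : ∀ i, Measurable (Y i) := fun i => hφm.comp (hmT i)
  set Yv : Ω → (Fin m → ℝ) := fun ω i => Y i ω with hYv_def
  have hYvm : Measurable Yv := measurable_pi_lambda _ fun i => hYm i
  set c : (Fin m → ℝ) → ℝ := fun z => pinv (ecdf z) Δ with hc_def
  have hcm : Measurable c := meas_pinv hm hΔ.1 hΔ.2.le
  have hEeq : E = {ω | φ (V ω) ≤ c (Yv ω)} := rfl
  -- independence of Yv and V
  have hfm : ∀ i, Measurable ((Sum.elim T fun _ : Unit => V) i) := by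
    rintro (j | j)
    exacts [hmT j, hVm]
  have hdisj : Disjoint (Finset.univ.image (Sum.inl : Fin m → Sum (Fin m) Unit))
      ({Sum.inr ()} : Finset (Sum (Fin m) Unit)) := by
    simp [Finset.disjoint_left]
  have hindep2 := hindep.indepFun_finset _ _ hdisj hfm
  have hIndYV : IndepFun Yv V P := by
    have hg1m : Measurable fun
        (t : {x // x ∈ Finset.univ.image (Sum.inl : Fin m → Sum (Fin m) Unit)} → U × L) =>
        (fun j : Fin m => φ (t ⟨Sum.inl j, Finset.mem_image_of_mem _ (Finset.mem_univ j)⟩)) :=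
      measurable_pi_lambda _ fun j => hφm.comp (measurable_pi_apply _)
    have hg2m : Measurable fun
        (t : {x // x ∈ ({Sum.inr ()} : Finset (Sum (Fin m) Unit))} → U × L) =>
        t ⟨Sum.inr (), Finset.mem_singleton_self _⟩ := measurable_pi_apply _
    exact hindep2.comp hg1m hg2m
  -- joint law
  have hmap_prod : Measure.map (fun ω => (Yv ω, V ω)) P = (Measure.map Yv P).prod PD := by
    rw [← hu]
    exact (indepFun_iff_map_prod_eq_prod_map_map hYvm.aemeasurable hVm.aemeasurable).1 hIndYV
  set ρm : Measure (Fin m → ℝ) := Measure.map Yv P with hρm_def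
  haveI : IsProbabilityMeasure ρm := Measure.isProbabilityMeasure_map hYvm.aemeasurable
  set C : Set ((Fin m → ℝ) × (U × L)) := {q | q.2 ∈ B ∧ φ q.2 ≤ c q.1} with hC_def
  have hCmeas : MeasurableSet C :=
    (measurable_snd hBmeas).inter
      (measurableSet_le (hφm.comp measurable_snd) (hcm.comp measurable_fst))
  have hAE : A ∩ E = (fun ω => (Yv ω, V ω)) ⁻¹' C := rfl
  have hPAE : P (A ∩ E) = PD B * ∫⁻ z, μ (Iic (c z)) ∂ρm := by
    rw [hAE, ← Measure.map_apply (hYvm.prodMk hVm) hCmeas, hmap_prod,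
      Measure.prod_apply hCmeas]
    have hfz : ∀ z, PD (Prod.mk z ⁻¹' C) = PD B * μ (Iic (c z)) := by
      intro z
      have h1 : Prod.mk z ⁻¹' C = B ∩ {v | φ v ≤ c z} := rfl
      have h2 : ν {v | φ v ≤ c z} = (PD B)⁻¹ * PD (B ∩ {v | φ v ≤ c z}) :=
        cond_apply hBmeas PD _
      have h3 : μ (Iic (c z)) = ν {v | φ v ≤ c z} := by
        rw [hμ_def, Measure.map_apply hφm measurableSet_Iic]
        rfl
      rw [h1, h3, h2, ← mul_assoc, ENNReal.mul_inv_cancel hB.ne' (measure_ne_top PD B),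
        one_mul]
    rw [lintegral_congr hfz, lintegral_const_mul' _ _ (measure_ne_top PD B)]
  have hcond : (P[|A]) E = ∫⁻ z, μ (Iic (c z)) ∂ρm := by
    rw [cond_apply hAmeas, hPAE, hPA, ← mul_assoc,
      ENNReal.inv_mul_cancel hB.ne' (measure_ne_top PD B), one_mul]
  -- good event
  set Good : Set (Fin m → ℝ) := {z | (∑ i, if z i < t₀ then (1 : ℝ) else 0) < Δ * m}
    with hGood_def
  have hsummeas : Measurable fun z : Fin m → ℝ => ∑ i, if z i < t₀ then (1 : ℝ) else 0 :=
    Finset.measurable_sum _ fun i _ =>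
      Measurable.ite ((measurable_pi_apply i) measurableSet_Iio) measurable_const
        measurable_const
  have hGoodmeas : MeasurableSet Good := measurableSet_lt hsummeas measurable_const
  have hint_lower : ENNReal.ofReal (Δ - ε) * ρm Good ≤ ∫⁻ z, μ (Iic (c z)) ∂ρm := by
    have hmono : Measurable fun z : Fin m → ℝ => μ (Iic (c z)) := by
      have hmono2 : Monotone fun t : ℝ => μ (Iic t) := fun a b hab =>
        measure_mono (Iic_subset_Iic.2 hab)
      exact hmono2.measurable.comp hcm
    calc ENNReal.ofReal (Δ - ε) * ρm Good
        = ∫⁻ _z in Good, ENNReal.ofReal (Δ - ε) ∂ρm := (setLIntegral_const _ _).symm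
      _ ≤ ∫⁻ z in Good, μ (Iic (c z)) ∂ρm := by
          refine setLIntegral_mono hmono fun z hz => ?_
          have h1 : t₀ ≤ c z := t0_le_pinv hm hΔ.1 hΔ.2.le z t₀ hz
          calc ENNReal.ofReal (Δ - ε) ≤ μ (Iic t₀) := ht₀Iic
            _ ≤ μ (Iic (c z)) := measure_mono (Iic_subset_Iic.2 h1)
      _ ≤ ∫⁻ z, μ (Iic (c z)) ∂ρm := setLIntegral_le_lintegral _ _
  -- Hoeffding bound on the bad event
  set p : ℝ := (μ (Iio t₀)).toReal with hp_def
  have hp_i : ∀ i, (P {ω | Y i ω < t₀}).toReal = p := by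
    intro i
    rw [hp_def]
    congr 1
    have h1 : {ω | Y i ω < t₀} = T i ⁻¹' (φ ⁻¹' Iio t₀) := rfl
    rw [h1, ← Measure.map_apply (hmT i) (hφm measurableSet_Iio), hT i, hμ_def,
      Measure.map_apply hφm measurableSet_Iio]
  have hYindep : iIndepFun Y P := by
    have h1 : iIndepFun
        (fun j : Fin m => (Sum.elim T fun _ : Unit => V) (Sum.inl j)) P :=
      iIndepFun_precomp Sum.inl Sum.inl_injective hindep
    exact h1.comp (fun _ => φ) fun _ => hφm
  have hp_le : p ≤ Δ - ε := by
    have h1 := ENNReal.toReal_mono ENNReal.ofReal_ne_top ht₀Iio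
    rwa [ENNReal.toReal_ofReal hr0.le] at h1
  have hHoeff := count_bound P hm Y hYm hYindep t₀ p Δ ε hp_i hε0 hp_le
  have hGoodc : ρm Goodᶜ = P {ω | Δ * m ≤ ∑ i, if Y i ω < t₀ then (1 : ℝ) else 0} := by
    rw [hρm_def, Measure.map_apply hYvm hGoodmeas.compl]
    congr 1
    ext ω
    simp only [Set.mem_preimage, Set.mem_compl_iff, hGood_def, Set.mem_setOf_eq, not_lt,
      hYv_def]
  have hρGood : 1 - Real.exp (-2 * (m : ℝ) * ε ^ 2) ≤ (ρm Good).toReal := by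
    have h1 : (ρm Goodᶜ).toReal ≤ Real.exp (-2 * (m : ℝ) * ε ^ 2) := by
      rw [hGoodc]; exact hHoeff
    have h2 : ρm Good = 1 - ρm Goodᶜ := by
      have hcc := prob_compl_eq_one_sub (μ := ρm) hGoodmeas.compl
      rwa [compl_compl] at hcc
    have h3 : (ρm Good).toReal = 1 - (ρm Goodᶜ).toReal := by
      rw [h2, ENNReal.toReal_sub_of_le prob_le_one ENNReal.one_ne_top, ENNReal.toReal_one]
    linarith
  -- final computation
  have hfinal : ENNReal.ofReal (Δ - ε) * ρm Good ≤ (P[|A]) E := by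
    rw [hcond]; exact hint_lower
  haveI : IsProbabilityMeasure (P[|A]) := cond_isProbabilityMeasure hPAne
  have hne_top : (P[|A]) E ≠ ⊤ := measure_ne_top _ _
  have h5 : (ENNReal.ofReal (Δ - ε) * ρm Good).toReal ≤ ((P[|A]) E).toReal :=
    ENNReal.toReal_mono hne_top hfinal
  rw [ENNReal.toReal_mul, ENNReal.toReal_ofReal hr0.le] at h5
  rw [max_eq_left hcase1.le]
  calc (Δ - ε) * (1 - 2 * Real.exp (-2 * (m : ℝ) * ε ^ 2))
      ≤ (Δ - ε) * (1 - Real.exp (-2 * (m : ℝ) * ε ^ 2)) := by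
        nlinarith [Real.exp_pos (-2 * (m : ℝ) * ε ^ 2)]
    _ ≤ (Δ - ε) * (ρm Good).toReal := mul_le_mul_of_nonneg_left hρGood hr0.le
    _ ≤ ((P[|A]) E).toReal := h5
end
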